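/- arXiv:2502.20086 — 3 statements merged into one kernel-verified Lean document; each statement's English description precedes it below -/
import Mathlib

section
/- Let C₀ ∈ ℝ^{n×n} be symmetric positive definite, J ∈ ℝ^{q×n}, σ > 0, and set C₁ = (C₀^{-1} + σ^{-2} Jᵀ J)^{-1}. Let λ₁, …, λ_n be the eigenvalues of the symmetric positive semidefinite matrix H = σ^{-2} C₀^{1/2} Jᵀ J C₀^{1/2}. Then tr(C₀^{-1} C₁) − n + log(det C₀ / det C₁) = Σ_{j=1}^{n} ( log(1 + λ_j) − λ_j / (1 + λ_j) ). Moreover, the nonzero eigenvalues of H coincide (with multiplicity) with the nonzero eigenvalues of σ^{-2} J C₀ Jᵀ. -/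
open MeasureTheory Matrix

/-- The positive semidefinite square root of a positive semidefinite matrix
(the definition removed from Mathlib, restored verbatim). -/
noncomputable def Matrix.PosSemidef.sqrt {n 𝕜 : Type*} [Fintype n] [DecidableEq n] [RCLike 𝕜] [PartialOrder 𝕜]
    {A : Matrix n n 𝕜} (hA : A.PosSemidef) : Matrix n n 𝕜 :=
  hA.1.eigenvectorUnitary.1 * diagonal ((↑) ∘ (√·) ∘ hA.1.eigenvalues) *
  (star hA.1.eigenvectorUnitary : Matrix n n 𝕜)

lemma my_sqrt_herm {k : ℕ} {A : Matrix (Fin k) (Fin k) ℝ} (hA : A.PosSemidef) :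
    hA.sqrt.IsHermitian := by
  unfold Matrix.PosSemidef.sqrt
  set U : Matrix (Fin k) (Fin k) ℝ := (hA.1.eigenvectorUnitary : Matrix (Fin k) (Fin k) ℝ)
  show (U * diagonal _ * star U).IsHermitian
  unfold Matrix.IsHermitian
  rw [Matrix.conjTranspose_mul, Matrix.conjTranspose_mul, Matrix.diagonal_conjTranspose]
  simp [Matrix.star_eq_conjTranspose, Matrix.mul_assoc]

lemma my_sqrt_mul_self {k : ℕ} {A : Matrix (Fin k) (Fin k) ℝ} (hA : A.PosSemidef) :
    hA.sqrt * hA.sqrt = A := by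
  unfold Matrix.PosSemidef.sqrt
  set U : Matrix (Fin k) (Fin k) ℝ := (hA.1.eigenvectorUnitary : Matrix (Fin k) (Fin k) ℝ) with hU
  have hU'U : star U * U = 1 := (Matrix.mem_unitaryGroup_iff').mp hA.1.eigenvectorUnitary.2
  have hspec : A = U * Matrix.diagonal hA.1.eigenvalues * star U := by
    simpa using hA.1.spectral_theorem
  show U * diagonal _ * star U * (U * diagonal _ * star U) = A
  calc _ = U * (diagonal ((↑) ∘ (√·) ∘ hA.1.eigenvalues) * (star U * U) * diagonal ((↑) ∘ (√·) ∘ hA.1.eigenvalues)) * star U := by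
          simp only [Matrix.mul_assoc]; rfl
    _ = A := by
      rw [hU'U, Matrix.mul_one, Matrix.diagonal_mul_diagonal]
      refine Eq.trans ?_ hspec.symm
      congr 2
      exact congrArg diagonal (funext fun i => by simp [Real.mul_self_sqrt (hA.eigenvalues_nonneg i)])

open Polynomial in
lemma my_eval_charpoly {k : ℕ} (M : Matrix (Fin k) (Fin k) ℝ) (x : ℝ) :
    M.charpoly.eval x = (x • (1 : Matrix (Fin k) (Fin k) ℝ) - M).det := by
  rw [Matrix.charpoly, eval_det, matPolyEquiv_charmatrix]
  congr 1
  simp only [Matrix.scalar, Algebra.algebraMap_eq_smul_one, eval_sub, eval_X, eval_C,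
    RingHom.mapMatrix_apply]
  congr 1
  ext i j
  simp [Matrix.one_apply, Matrix.diagonal_apply]

lemma smul_one_sub_eq_aux {k : ℕ} (M : Matrix (Fin k) (Fin k) ℝ) {x : ℝ} (hx : x ≠ 0) :
    x • (1 : Matrix (Fin k) (Fin k) ℝ) - M = x • (1 + (-x⁻¹) • M) := by
  rw [smul_add, smul_smul, mul_neg, mul_inv_cancel₀ hx, neg_one_smul, sub_eq_add_neg]

open Polynomial in
lemma rect_charpoly_comm {n q : ℕ} (A : Matrix (Fin n) (Fin q) ℝ)
    (B : Matrix (Fin q) (Fin n) ℝ) :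
    (A * B).charpoly * X ^ q = (B * A).charpoly * X ^ n := by
  have key : ∀ x : ℝ, x ≠ 0 →
      ((A * B).charpoly * X ^ q).eval x = ((B * A).charpoly * X ^ n).eval x := by
    intro x hx
    have h1 : ((A * B).charpoly).eval x = x ^ n * (1 + (-x⁻¹) • (A * B)).det := by
      rw [my_eval_charpoly, smul_one_sub_eq_aux _ hx, Matrix.det_smul]
      simp [Fintype.card_fin]
    have h2 : ((B * A).charpoly).eval x = x ^ q * (1 + (-x⁻¹) • (B * A)).det := by
      rw [my_eval_charpoly, smul_one_sub_eq_aux _ hx, Matrix.det_smul]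
      simp [Fintype.card_fin]
    have h3 : (1 + (-x⁻¹) • (A * B)).det = (1 + (-x⁻¹) • (B * A)).det := by
      have := Matrix.det_one_add_mul_comm A ((-x⁻¹) • B)
      rwa [Matrix.mul_smul, Matrix.smul_mul] at this
    simp only [eval_mul, eval_pow, eval_X, h1, h2, h3]
    ring
  have hfun : (fun x : ℝ => ((A * B).charpoly * X ^ q).eval x)
      = fun x : ℝ => ((B * A).charpoly * X ^ n).eval x := by
    apply Continuous.ext_on (dense_compl_singleton (0 : ℝ))
      (Polynomial.continuous _) (Polynomial.continuous _)
    intro x hx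
    exact key x hx
  exact Polynomial.funext fun x => congrFun hfun x

open Polynomial in
lemma herm_charpoly {k : ℕ} {M : Matrix (Fin k) (Fin k) ℝ} (hM : M.IsHermitian) :
    M.charpoly = ∏ i, (X - C (hM.eigenvalues i)) := by
  set U : Matrix (Fin k) (Fin k) ℝ := (hM.eigenvectorUnitary : Matrix (Fin k) (Fin k) ℝ) with hU
  have hUU : U * star U = 1 := (Matrix.mem_unitaryGroup_iff).mp hM.eigenvectorUnitary.2
  have hspec : M = U * Matrix.diagonal hM.eigenvalues * star U := by
    simpa using hM.spectral_theorem
  have hmapC : ∀ (P Q : Matrix (Fin k) (Fin k) ℝ),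
      (P * Q).map (C : ℝ →+* ℝ[X]) = P.map C * Q.map C := fun P Q => Matrix.map_mul
  have hcm : charmatrix M
      = (U.map C) * charmatrix (Matrix.diagonal hM.eigenvalues) * ((star U).map C) := by
    have hdiagX : (U.map (C : ℝ →+* ℝ[X])) * (Matrix.diagonal fun _ => (X : ℝ[X]))
        * ((star U).map C) = Matrix.diagonal fun _ => (X : ℝ[X]) := by
      have : (Matrix.diagonal fun _ => (X : ℝ[X]))
          = (X : ℝ[X]) • (1 : Matrix (Fin k) (Fin k) ℝ[X]) := by
        ext i j; simp [Matrix.diagonal_apply, Matrix.one_apply]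
      rw [this, Matrix.mul_smul, Matrix.mul_one, Matrix.smul_mul, ← hmapC, hUU]
      simp
    have hcm' : ∀ (N : Matrix (Fin k) (Fin k) ℝ),
        charmatrix N = (Matrix.diagonal fun _ => (X : ℝ[X])) - N.map C := by
      intro N; ext i j; rw [charmatrix_apply]; simp [Matrix.map_apply]
    rw [hcm' M, hcm' (Matrix.diagonal hM.eigenvalues)]
    rw [Matrix.mul_sub, Matrix.sub_mul, hdiagX]
    congr 1
    rw [← hmapC, ← hmapC, ← hspec]
  have hdetU : (U.map (C : ℝ →+* ℝ[X])).det * ((star U).map C).det = 1 := by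
    rw [← Matrix.det_mul, ← hmapC, hUU]
    simp
  rw [Matrix.charpoly, hcm, Matrix.det_mul, Matrix.det_mul]
  rw [show (U.map (C : ℝ →+* ℝ[X])).det * (charmatrix (Matrix.diagonal hM.eigenvalues)).det
        * ((star U).map C).det
      = (U.map (C : ℝ →+* ℝ[X])).det * ((star U).map C).det
        * (charmatrix (Matrix.diagonal hM.eigenvalues)).det by ring]
  rw [hdetU, one_mul]
  have : charmatrix (Matrix.diagonal hM.eigenvalues)
      = Matrix.diagonal fun i => (X : ℝ[X]) - C (hM.eigenvalues i) := by
    ext i j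
    by_cases h : i = j
    · subst h; rw [charmatrix_apply_eq]; simp [Matrix.diagonal_apply]
    · rw [charmatrix_apply_ne _ _ _ h]; simp [Matrix.diagonal_apply, h]
  rw [this, Matrix.det_diagonal]

lemma herm_one_add {k : ℕ} {M : Matrix (Fin k) (Fin k) ℝ} (hM : M.IsHermitian)
    (hne : ∀ i, 1 + hM.eigenvalues i ≠ 0) :
    (1 + M).det = ∏ i, (1 + hM.eigenvalues i) ∧
    ((1 + M)⁻¹).trace = ∑ i, (1 + hM.eigenvalues i)⁻¹ := by
  set U : Matrix (Fin k) (Fin k) ℝ := (hM.eigenvectorUnitary : Matrix (Fin k) (Fin k) ℝ) with hU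
  have hUU : U * star U = 1 := (Matrix.mem_unitaryGroup_iff).mp hM.eigenvectorUnitary.2
  have hU'U : star U * U = 1 := (Matrix.mem_unitaryGroup_iff').mp hM.eigenvectorUnitary.2
  have hspec : M = U * Matrix.diagonal hM.eigenvalues * star U := by
    simpa using hM.spectral_theorem
  have hsum : 1 + M = U * Matrix.diagonal (fun i => 1 + hM.eigenvalues i) * star U := by
    have : Matrix.diagonal (fun i => 1 + hM.eigenvalues i)
        = 1 + Matrix.diagonal hM.eigenvalues := by
      ext i j; by_cases h : i = j <;> simp [Matrix.diagonal_apply, Matrix.one_apply, h]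
    rw [this, Matrix.mul_add, Matrix.add_mul, ← hspec, Matrix.mul_one, hUU]
  have hdet : (1 + M).det = ∏ i, (1 + hM.eigenvalues i) := by
    rw [hsum, Matrix.det_mul, Matrix.det_mul, Matrix.det_diagonal]
    rw [show U.det * (∏ i, (1 + hM.eigenvalues i)) * (star U).det
        = (∏ i, (1 + hM.eigenvalues i)) * (U.det * (star U).det) by ring]
    rw [← Matrix.det_mul, hUU]
    simp
  refine ⟨hdet, ?_⟩
  have hinv : (1 + M)⁻¹ = U * Matrix.diagonal (fun i => (1 + hM.eigenvalues i)⁻¹) * star U := by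
    apply Matrix.inv_eq_right_inv
    rw [hsum]
    calc U * Matrix.diagonal (fun i => 1 + hM.eigenvalues i) * star U *
          (U * Matrix.diagonal (fun i => (1 + hM.eigenvalues i)⁻¹) * star U)
        = U * (Matrix.diagonal (fun i => 1 + hM.eigenvalues i) * (star U * U) *
            Matrix.diagonal (fun i => (1 + hM.eigenvalues i)⁻¹)) * star U := by
          simp only [Matrix.mul_assoc]
      _ = 1 := by
          rw [hU'U, Matrix.mul_one, Matrix.diagonal_mul_diagonal]
          have : (fun i => (1 + hM.eigenvalues i) * (1 + hM.eigenvalues i)⁻¹)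
              = fun _ => (1 : ℝ) := by
            funext i; exact mul_inv_cancel₀ (hne i)
          rw [this, Matrix.diagonal_one, Matrix.mul_one, hUU]
  rw [hinv, Matrix.trace_mul_comm (U * Matrix.diagonal fun i => (1 + hM.eigenvalues i)⁻¹) (star U)]
  rw [← Matrix.mul_assoc, hU'U, Matrix.one_mul, Matrix.trace_diagonal]

/-- **Gaussian KL-divergence identity and eigenvalue correspondence.**
For `C₁ = (C₀⁻¹ + σ⁻² Jᵀ J)⁻¹` and `H = σ⁻² C₀^{1/2} Jᵀ J C₀^{1/2}` with
eigenvalues `λ₁, …, λ_n`, one has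
`tr(C₀⁻¹ C₁) − n + log(det C₀ / det C₁) = Σ_j (log(1 + λ_j) − λ_j/(1 + λ_j))`,
and the nonzero eigenvalues of `H` coincide (with multiplicity) with the
nonzero eigenvalues of `σ⁻² J C₀ Jᵀ`. -/
theorem gaussian_kl_trace_logdet_identity_and_eigenvalue_correspondence
    {n q : ℕ} (C0 : Matrix (Fin n) (Fin n) ℝ) (hC0 : C0.PosDef)
    (J : Matrix (Fin q) (Fin n) ℝ) (σ : ℝ) (hσ : 0 < σ)
    (C1 : Matrix (Fin n) (Fin n) ℝ)
    (hC1 : C1 = (C0⁻¹ + (σ ^ 2)⁻¹ • (Jᵀ * J))⁻¹)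
    (H : Matrix (Fin n) (Fin n) ℝ)
    (hHdef : H = (σ ^ 2)⁻¹ •
      (hC0.posSemidef.sqrt * (Jᵀ * J) * hC0.posSemidef.sqrt))
    (hHherm : H.IsHermitian)
    (H' : Matrix (Fin q) (Fin q) ℝ)
    (hH'def : H' = (σ ^ 2)⁻¹ • (J * C0 * Jᵀ))
    (hH'herm : H'.IsHermitian) :
    ((C0⁻¹ * C1).trace - (n : ℝ) + Real.log (C0.det / C1.det)
      = ∑ j : Fin n, (Real.log (1 + hHherm.eigenvalues j)
          - hHherm.eigenvalues j / (1 + hHherm.eigenvalues j))) ∧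
    (Multiset.filter (fun x => x ≠ 0) (Finset.univ.val.map hHherm.eigenvalues)
      = Multiset.filter (fun x => x ≠ 0) (Finset.univ.val.map hH'herm.eigenvalues)) := by
  classical
  set S : Matrix (Fin n) (Fin n) ℝ := hC0.posSemidef.sqrt with hSdef
  have hSherm : S.IsHermitian := my_sqrt_herm hC0.posSemidef
  have hSS : S * S = C0 := my_sqrt_mul_self hC0.posSemidef
  have hdetC0 : 0 < C0.det := hC0.det_pos
  have hdetSS : S.det * S.det = C0.det := by rw [← Matrix.det_mul, hSS]
  have hdetS : IsUnit S.det := by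
    refine isUnit_iff_ne_zero.mpr fun h => ?_
    rw [h, mul_zero] at hdetSS
    exact hdetC0.ne' hdetSS.symm
  -- the rectangular factor
  set M : Matrix (Fin q) (Fin n) ℝ := σ⁻¹ • (J * S) with hMdef
  have hMH : Mᴴ = σ⁻¹ • (S * Jᵀ) := by
    rw [hMdef, Matrix.conjTranspose_smul, Matrix.conjTranspose_mul, hSherm.eq,
      Matrix.conjTranspose_eq_transpose_of_trivial, star_trivial]
  have hσσ : σ⁻¹ * σ⁻¹ = (σ ^ 2)⁻¹ := by
    rw [pow_two, mul_inv]
  have hassoc1 : S * (Jᵀ * J) * S = (S * Jᵀ) * (J * S) := by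
    simp only [Matrix.mul_assoc]
  have hassoc2 : J * (S * S) * Jᵀ = (J * S) * (S * Jᵀ) := by
    simp only [Matrix.mul_assoc]
  have hHM : H = Mᴴ * M := by
    rw [hMH, hMdef, Matrix.smul_mul, Matrix.mul_smul, smul_smul, hσσ, hHdef, hassoc1]
  have hH'M : H' = M * Mᴴ := by
    rw [hMH, hMdef, Matrix.smul_mul, Matrix.mul_smul, smul_smul, hσσ, hH'def, ← hSS, hassoc2]
  have hHpsd : H.PosSemidef := by
    rw [hHM]; exact Matrix.posSemidef_conjTranspose_mul_self M
  have hlam : ∀ i, 0 ≤ hHherm.eigenvalues i := fun i => hHpsd.eigenvalues_nonneg i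
  have hne : ∀ i, 1 + hHherm.eigenvalues i ≠ 0 := fun i =>
    ne_of_gt (by linarith [hlam i])
  -- Part 1
  have hS1 : S * S⁻¹ = 1 := Matrix.mul_nonsing_inv S hdetS
  have hS2 : S⁻¹ * S = 1 := Matrix.nonsing_inv_mul S hdetS
  have hC0inv : C0⁻¹ = S⁻¹ * S⁻¹ := by rw [← hSS, Matrix.mul_inv_rev]
  have hSinvH : S⁻¹ * H * S⁻¹ = (σ ^ 2)⁻¹ • (Jᵀ * J) := by
    rw [hHdef, Matrix.mul_smul, Matrix.smul_mul]
    congr 1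
    calc S⁻¹ * (S * (Jᵀ * J) * S) * S⁻¹
        = (S⁻¹ * S) * ((Jᵀ * J) * (S * S⁻¹)) := by simp only [Matrix.mul_assoc]
      _ = Jᵀ * J := by rw [hS2, hS1, Matrix.one_mul, Matrix.mul_one]
  have hkey : C0⁻¹ + (σ ^ 2)⁻¹ • (Jᵀ * J) = S⁻¹ * (1 + H) * S⁻¹ := by
    rw [Matrix.mul_add, Matrix.add_mul, Matrix.mul_one, hC0inv, hSinvH]
  have h1H : (1 + H).PosDef := Matrix.PosDef.one.add_posSemidef hHpsd
  have hdet1Hpos : 0 < (1 + H).det := h1H.det_pos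
  have hherm1 := herm_one_add hHherm hne
  have hC1' : C1 = S * ((1 + H)⁻¹ * S) := by
    rw [hC1, hkey, Matrix.mul_inv_rev, Matrix.mul_inv_rev,
      Matrix.nonsing_inv_nonsing_inv S hdetS]
  have htr : (C0⁻¹ * C1).trace = ((1 + H)⁻¹).trace := by
    have hC0C1 : C0⁻¹ * C1 = S⁻¹ * ((1 + H)⁻¹ * S) := by
      calc C0⁻¹ * C1 = S⁻¹ * ((S⁻¹ * S) * ((1 + H)⁻¹ * S)) := by
            rw [hC0inv, hC1']; simp only [Matrix.mul_assoc]
        _ = S⁻¹ * ((1 + H)⁻¹ * S) := by rw [hS2, Matrix.one_mul]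
    rw [hC0C1, Matrix.trace_mul_comm, Matrix.mul_assoc, hS1, Matrix.mul_one]
  have hdetC1 : C1.det = C0.det * ((1 + H).det)⁻¹ := by
    rw [hC1', Matrix.det_mul, Matrix.det_mul, Matrix.det_nonsing_inv, Ring.inverse_eq_inv]
    rw [← hdetSS]; ring
  have hlogdet : Real.log (C0.det / C1.det) = Real.log ((1 + H).det) := by
    congr 1
    rw [hdetC1]
    field_simp
  refine ⟨?_, ?_⟩
  · rw [htr, hherm1.2, hlogdet, hherm1.1,
      Real.log_prod (fun i _ => hne i)]
    have hn : (n : ℝ) = ∑ _i : Fin n, (1 : ℝ) := by simp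
    rw [hn, ← Finset.sum_sub_distrib, ← Finset.sum_add_distrib]
    apply Finset.sum_congr rfl
    intro i _
    have h := hne i
    field_simp
    ring
  · -- Part 2: eigenvalue correspondence
    have hrect := rect_charpoly_comm Mᴴ M
    rw [← hHM, ← hH'M] at hrect
    have hHc := herm_charpoly hHherm
    have hH'c := herm_charpoly hH'herm
    have hPne : H.charpoly ≠ 0 := H.charpoly_monic.ne_zero
    have hP'ne : H'.charpoly ≠ 0 := H'.charpoly_monic.ne_zero
    have hXq : (((Polynomial.X : Polynomial ℝ)) ^ q) ≠ 0 := pow_ne_zero _ Polynomial.X_ne_zero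
    have hXn : (((Polynomial.X : Polynomial ℝ)) ^ n) ≠ 0 := pow_ne_zero _ Polynomial.X_ne_zero
    have hroots := congrArg Polynomial.roots hrect
    rw [Polynomial.roots_mul (mul_ne_zero hPne hXq),
      Polynomial.roots_mul (mul_ne_zero hP'ne hXn),
      Polynomial.roots_pow, Polynomial.roots_pow, Polynomial.roots_X] at hroots
    have hrootsH : H.charpoly.roots = Finset.univ.val.map hHherm.eigenvalues := by
      rw [hHc]
      have : (∏ i, (Polynomial.X - Polynomial.C (hHherm.eigenvalues i)))
          = ((Finset.univ.val.map hHherm.eigenvalues).map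
              (fun a => Polynomial.X - Polynomial.C a)).prod := by
        rw [Multiset.map_map]; rfl
      rw [this, Polynomial.roots_multiset_prod_X_sub_C]
    have hrootsH' : H'.charpoly.roots = Finset.univ.val.map hH'herm.eigenvalues := by
      rw [hH'c]
      have : (∏ i, (Polynomial.X - Polynomial.C (hH'herm.eigenvalues i)))
          = ((Finset.univ.val.map hH'herm.eigenvalues).map
              (fun a => Polynomial.X - Polynomial.C a)).prod := by
        rw [Multiset.map_map]; rfl
      rw [this, Polynomial.roots_multiset_prod_X_sub_C]
    rw [hrootsH, hrootsH'] at hroots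
    have hfilter := congrArg (Multiset.filter (fun x : ℝ => x ≠ 0)) hroots
    have hz : ∀ m : ℕ, Multiset.filter (fun x : ℝ => x ≠ 0) (m • ({0} : Multiset ℝ)) = 0 := by
      intro m
      rw [Multiset.nsmul_singleton, Multiset.filter_eq_nil]
      intro a ha
      simp [Multiset.eq_of_mem_replicate ha]
    rwa [Multiset.filter_add, Multiset.filter_add, hz, hz, add_zero, add_zero] at hfilter
end

section
/- Let ρ_y be a probability density on ℝ^d and ρ_m a probability density on ℝ^n. Let S : ℝ^{d+n} → ℝ^{d+n} be a C¹ diffeomorphism of lower-triangular form S(u_y, u_m) = (A(u_y), B(u_y, u_m)), where A : ℝ^d → ℝ^d is a C¹ diffeomorphism. Suppose S pushes forward the product measure with density ρ_y(u_y) ρ_m(u_m) to the measure with joint density π(y, m) on ℝ^d × ℝ^n. Then: (i) A pushes forward the measure with density ρ_y to the measure with the marginal density π_Y(y) = ∫_{ℝ^n} π(y, m) dm; and (ii) for Lebesgue-almost every y ∈ ℝ^d with π_Y(y) > 0, the map u_m ↦ B(A^{-1}(y), u_m) pushes forward the measure with density ρ_m to the measure with the conditional density m ↦ π(y, m)/π_Y(y).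 -/
open MeasureTheory ProbabilityTheory

/-- **Marginal and conditional pushforwards of a lower-triangular (Knothe–Rosenblatt
type) C¹ diffeomorphism.** If `S(u_y, u_m) = (A(u_y), B(u_y, u_m))` pushes
`ρ_y ⊗ ρ_m` forward to the joint density `π`, then `A` pushes `ρ_y` forward to the
marginal `π_Y`, and for a.e. `y` with `π_Y(y) > 0`, `u_m ↦ B(A⁻¹(y), u_m)` pushes
`ρ_m` forward to the conditional density `m ↦ π(y,m)/π_Y(y)`. -/
theorem triangular_map_marginal_and_conditional_pushforward
    {d n : ℕ}
    (ρy : (Fin d → ℝ) → ℝ) (hρynn : ∀ y, 0 ≤ ρy y) (hρydens : ∫ y, ρy y = 1)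
    (ρm : (Fin n → ℝ) → ℝ) (hρmnn : ∀ m, 0 ≤ ρm m) (hρmdens : ∫ m, ρm m = 1)
    (A Ainv : (Fin d → ℝ) → (Fin d → ℝ))
    (hA : ContDiff ℝ 1 A) (hAinv : ContDiff ℝ 1 Ainv)
    (hAleft : Function.LeftInverse Ainv A) (hAright : Function.RightInverse Ainv A)
    (B : (Fin d → ℝ) → (Fin n → ℝ) → (Fin n → ℝ))
    (S Sinv : (Fin d → ℝ) × (Fin n → ℝ) → (Fin d → ℝ) × (Fin n → ℝ))
    (hSdef : ∀ p, S p = (A p.1, B p.1 p.2))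
    (hS : ContDiff ℝ 1 S) (hSinv : ContDiff ℝ 1 Sinv)
    (hSleft : Function.LeftInverse Sinv S) (hSright : Function.RightInverse Sinv S)
    (π : (Fin d → ℝ) → (Fin n → ℝ) → ℝ)
    (hπmeas : Measurable (Function.uncurry π)) (hπnn : ∀ y m, 0 ≤ π y m)
    (hpush : Measure.map S
        ((volume.withDensity (fun y => ENNReal.ofReal (ρy y))).prod
          (volume.withDensity (fun m => ENNReal.ofReal (ρm m))))
      = (volume.prod volume).withDensity
          (fun p => ENNReal.ofReal (π p.1 p.2)))
    (πY : (Fin d → ℝ) → ℝ) (hπY : ∀ y, πY y = ∫ m, π y m) :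
    (Measure.map A (volume.withDensity (fun y => ENNReal.ofReal (ρy y)))
      = volume.withDensity (fun y => ENNReal.ofReal (πY y))) ∧
    (∀ᵐ y : Fin d → ℝ, 0 < πY y →
      Measure.map (fun um => B (Ainv y) um)
          (volume.withDensity (fun m => ENNReal.ofReal (ρm m)))
        = volume.withDensity (fun m => ENNReal.ofReal (π y m / πY y))) := by
  classical
  set μy := volume.withDensity (fun y => ENNReal.ofReal (ρy y)) with hμy
  set μm := volume.withDensity (fun m => ENNReal.ofReal (ρm m)) with hμm
  set ν := (volume.prod volume).withDensity (fun p => ENNReal.ofReal (π p.1 p.2)) with hν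
  -- basic measurability facts
  have hAmeas : Measurable A := hA.continuous.measurable
  have hAinvmeas : Measurable Ainv := hAinv.continuous.measurable
  have hSmeas : Measurable S := hS.continuous.measurable
  have hBmeas : Measurable (fun p : (Fin d → ℝ) × (Fin n → ℝ) => B p.1 p.2) := by
    have : (fun p : (Fin d → ℝ) × (Fin n → ℝ) => B p.1 p.2) = fun p => (S p).2 := by
      funext p; rw [hSdef]
    rw [this]; exact measurable_snd.comp hSmeas
  have hBu : ∀ u, Measurable (fun um => B u um) := fun u =>
    hBmeas.comp (measurable_prodMk_left)
  -- probability measures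
  have hρyint : Integrable ρy := by
    by_contra h; rw [integral_undef h] at hρydens; norm_num at hρydens
  have hρmint : Integrable ρm := by
    by_contra h; rw [integral_undef h] at hρmdens; norm_num at hρmdens
  have hμyP : IsProbabilityMeasure μy := by
    constructor
    rw [hμy, withDensity_apply _ MeasurableSet.univ, Measure.restrict_univ,
      ← ofReal_integral_eq_lintegral_ofReal hρyint (Filter.Eventually.of_forall hρynn),
      hρydens, ENNReal.ofReal_one]
  have hμmP : IsProbabilityMeasure μm := by
    constructor
    rw [hμm, withDensity_apply _ MeasurableSet.univ, Measure.restrict_univ,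
      ← ofReal_integral_eq_lintegral_ofReal hρmint (Filter.Eventually.of_forall hρmnn),
      hρmdens, ENNReal.ofReal_one]
  have hνP : IsProbabilityMeasure ν := by
    constructor
    change ν _ = 1
    rw [← hpush, Measure.map_apply hSmeas MeasurableSet.univ]
    simp
  -- g is the density of the first marginal
  set g : (Fin d → ℝ) → ENNReal := fun y => ∫⁻ m, ENNReal.ofReal (π y m) with hg
  have hπmeas' : Measurable (fun p : (Fin d → ℝ) × (Fin n → ℝ) => ENNReal.ofReal (π p.1 p.2)) :=
    hπmeas.ennreal_ofReal
  have hgmeas : Measurable g := hπmeas'.lintegral_prod_right'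
  -- key rectangle formula for ν
  have hrect : ∀ ⦃s : Set (Fin d → ℝ)⦄, MeasurableSet s → ∀ ⦃t : Set (Fin n → ℝ)⦄,
      MeasurableSet t → ν (s ×ˢ t) = ∫⁻ y in s, ∫⁻ m in t, ENNReal.ofReal (π y m) := by
    intro s hs t ht
    rw [hν, withDensity_apply _ (hs.prod ht), ← Measure.prod_restrict]
    exact lintegral_prod _ hπmeas'.aemeasurable
  -- the first marginal of ν
  have hfst : ν.fst = Measure.map A μy := by
    have h1 : ν.fst = Measure.map (Prod.fst ∘ S) (μy.prod μm) := by
      rw [← hpush, Measure.fst, Measure.map_map measurable_fst hSmeas]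
    have h2 : (Prod.fst ∘ S) = A ∘ Prod.fst := by
      funext p; simp [hSdef p]
    rw [h1, h2, ← Measure.map_map hAmeas measurable_fst, Measure.map_fst_prod]
    simp
  have hfstg : ν.fst = volume.withDensity g := by
    ext s hs
    rw [Measure.fst_apply hs, ← Set.prod_univ, hrect hs MeasurableSet.univ,
      withDensity_apply _ hs]
    simp [hg]
  -- a.e. identification of g with πY
  have hgfin : ∀ᵐ y ∂(volume : Measure (Fin d → ℝ)), g y < ⊤ := by
    refine ae_lt_top hgmeas ?_
    have h1 : ∫⁻ y, g y ∂(volume : Measure (Fin d → ℝ)) = ν Set.univ := by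
      rw [← Set.univ_prod_univ, hrect MeasurableSet.univ MeasurableSet.univ]
      simp [hg]
    rw [h1, measure_univ]
    exact ENNReal.one_ne_top
  have hgae : ∀ᵐ y ∂(volume : Measure (Fin d → ℝ)), g y = ENNReal.ofReal (πY y) := by
    filter_upwards [hgfin] with y hy
    have hint : Integrable (π y) := by
      refine ⟨(hπmeas.of_uncurry_left).aestronglyMeasurable, ?_⟩
      rw [hasFiniteIntegral_iff_ofReal (Filter.Eventually.of_forall (hπnn y))]
      exact hy
    rw [hπY y, ofReal_integral_eq_lintegral_ofReal hint
      (Filter.Eventually.of_forall (hπnn y))]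
  -- part (i)
  have hmapA : Measure.map A μy = volume.withDensity fun y => ENNReal.ofReal (πY y) := by
    rw [← hfst, hfstg]
    exact withDensity_congr_ae hgae
  -- the pushforward kernel
  have hκ0meas : Measurable (fun u => Measure.map (fun um => B u um) μm) := by
    refine Measure.measurable_of_measurable_coe _ (fun t ht => ?_)
    simp_rw [Measure.map_apply (hBu _) ht]
    have heq : ∀ u, μm ((fun um => B u um) ⁻¹' t)
        = ∫⁻ um, t.indicator (fun _ => (1 : ENNReal)) (B u um) ∂μm := by
      intro u
      rw [← lintegral_indicator_one ((hBu u) ht)]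
      refine lintegral_congr fun um => ?_
      by_cases h : B u um ∈ t <;> simp [Set.indicator, h]
    simp_rw [heq]
    exact Measurable.lintegral_prod_right'
      ((measurable_const.indicator ht).comp hBmeas)
  set κ : ProbabilityTheory.Kernel (Fin d → ℝ) (Fin n → ℝ) :=
    ⟨fun y => Measure.map (fun um => B (Ainv y) um) μm,
      hκ0meas.comp hAinvmeas⟩ with hκdef
  have hκapp : ∀ y, κ y = Measure.map (fun um => B (Ainv y) um) μm := fun y => rfl
  haveI hκmarkov : ProbabilityTheory.IsMarkovKernel κ := by
    refine ⟨fun y => ?_⟩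
    rw [hκapp]
    exact Measure.isProbabilityMeasure_map (hBu _).aemeasurable
  -- ν disintegrates through κ
  have hcomp : ν = ν.fst ⊗ₘ κ := by
    refine MeasureTheory.ext_of_generate_finite _
      generateFrom_prod.symm isPiSystem_prod ?_ ?_
    · rintro _ ⟨s, hs, t, ht, rfl⟩
      simp only [Set.mem_setOf_eq] at hs ht
      have hpre : S ⁻¹' (s ×ˢ t)
          = ((fun p : (Fin d → ℝ) × (Fin n → ℝ) => A p.1) ⁻¹' s)
            ∩ ((fun p : (Fin d → ℝ) × (Fin n → ℝ) => B p.1 p.2) ⁻¹' t) := by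
        ext p
        simp [hSdef p, Set.mem_prod]
      have hmeasE : MeasurableSet (((fun p : (Fin d → ℝ) × (Fin n → ℝ) => A p.1) ⁻¹' s)
          ∩ ((fun p : (Fin d → ℝ) × (Fin n → ℝ) => B p.1 p.2) ⁻¹' t)) :=
        ((hAmeas.comp measurable_fst) hs).inter (hBmeas ht)
      have hLHS : ν (s ×ˢ t) = ∫⁻ u in A ⁻¹' s, μm ((fun um => B u um) ⁻¹' t) ∂μy := by
        rw [← hpush, Measure.map_apply hSmeas (hs.prod ht), hpre,
          Measure.prod_apply hmeasE]
        rw [← lintegral_indicator (hAmeas hs)]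
        refine lintegral_congr fun u => ?_
        by_cases h : A u ∈ s
        · have : Prod.mk u ⁻¹' (((fun p : (Fin d → ℝ) × (Fin n → ℝ) => A p.1) ⁻¹' s)
              ∩ ((fun p : (Fin d → ℝ) × (Fin n → ℝ) => B p.1 p.2) ⁻¹' t))
              = (fun um => B u um) ⁻¹' t := by
            ext um; simp [h]
          simp [this, Set.indicator, h]
        · have : Prod.mk u ⁻¹' (((fun p : (Fin d → ℝ) × (Fin n → ℝ) => A p.1) ⁻¹' s)
              ∩ ((fun p : (Fin d → ℝ) × (Fin n → ℝ) => B p.1 p.2) ⁻¹' t)) = ∅ := by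
            ext um; simp [h]
          simp [this, Set.indicator, h]
      have hRHS : (ν.fst ⊗ₘ κ) (s ×ˢ t)
          = ∫⁻ u in A ⁻¹' s, μm ((fun um => B u um) ⁻¹' t) ∂μy := by
        rw [Measure.compProd_apply_prod hs ht, hfst,
          setLIntegral_map hs (κ.measurable_coe ht) hAmeas]
        refine lintegral_congr fun u => ?_
        rw [hκapp, hAleft u, Measure.map_apply (hBu u) ht]
      rw [hLHS, hRHS]
    · rw [Measure.compProd_apply_univ, Measure.fst_univ]
  have huniq1 := ProbabilityTheory.eq_condKernel_of_measure_eq_compProd κ hcomp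
  -- the conditional-density kernel
  have hπYmeas : Measurable πY := by
    have h1 : πY = fun y => ∫ m, π y m := funext hπY
    rw [h1]
    exact hπmeas.stronglyMeasurable.integral_prod_right'.measurable
  set c : Set (Fin d → ℝ) := {y | 0 < πY y ∧ g y = ENNReal.ofReal (πY y)} with hcdef
  have hc : MeasurableSet c := by
    have h' : Measurable fun y => ENNReal.ofReal (πY y) :=
      ENNReal.measurable_ofReal.comp hπYmeas
    have hceq : c = {y | 0 < πY y} ∩ ({y | g y ≤ ENNReal.ofReal (πY y)}
        ∩ {y | ENNReal.ofReal (πY y) ≤ g y}) := by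
      ext y
      simp only [hcdef, Set.mem_setOf_eq, Set.mem_inter_iff, le_antisymm_iff]
    rw [hceq]
    exact (measurableSet_lt measurable_const hπYmeas).inter
      ((measurableSet_le hgmeas h').inter (measurableSet_le h' hgmeas))
  set M1 : (Fin d → ℝ) → Measure (Fin n → ℝ) :=
    fun y => volume.withDensity fun m => ENNReal.ofReal (π y m / πY y) with hM1def
  have hdmeas : Measurable (fun p : (Fin d → ℝ) × (Fin n → ℝ) =>
      ENNReal.ofReal (π p.1 p.2 / πY p.1)) := by
    have : Measurable (fun p : (Fin d → ℝ) × (Fin n → ℝ) => π p.1 p.2 / πY p.1) :=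
      hπmeas.div (hπYmeas.comp measurable_fst)
    exact this.ennreal_ofReal
  have hM1meas : Measurable M1 := by
    refine Measure.measurable_of_measurable_coe _ (fun t ht => ?_)
    simp_rw [hM1def, withDensity_apply _ ht]
    exact Measurable.lintegral_prod_right' hdmeas
  set κ' : ProbabilityTheory.Kernel (Fin d → ℝ) (Fin n → ℝ) :=
    ⟨c.piecewise M1 (fun _ => μm),
      Measurable.piecewise hc hM1meas measurable_const⟩ with hκ'def
  have hκ'mem : ∀ y ∈ c, κ' y = M1 y := fun y hy => by
    show c.piecewise M1 (fun _ => μm) y = M1 y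
    exact Set.piecewise_eq_of_mem _ _ _ hy
  have hκ'nmem : ∀ y ∉ c, κ' y = μm := fun y hy => by
    show c.piecewise M1 (fun _ => μm) y = μm
    exact Set.piecewise_eq_of_notMem _ _ _ hy
  -- mass computation on c
  have hM1t : ∀ y ∈ c, ∀ t : Set (Fin n → ℝ), MeasurableSet t →
      M1 y t = (∫⁻ m in t, ENNReal.ofReal (π y m)) / ENNReal.ofReal (πY y) := by
    intro y hy t ht
    obtain ⟨hy1, _⟩ := hy
    rw [hM1def, withDensity_apply _ ht]
    have h1 : ∀ m, ENNReal.ofReal (π y m / πY y)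
        = ENNReal.ofReal (π y m) * (ENNReal.ofReal (πY y))⁻¹ := by
      intro m
      rw [ENNReal.ofReal_div_of_pos hy1, div_eq_mul_inv]
    simp_rw [h1]
    rw [lintegral_mul_const' _ _ (ENNReal.inv_ne_top.2 (ENNReal.ofReal_pos.2 hy1).ne'), div_eq_mul_inv]
  haveI hκ'markov : ProbabilityTheory.IsMarkovKernel κ' := by
    refine ⟨fun y => ?_⟩
    by_cases hy : y ∈ c
    · constructor
      rw [hκ'mem y hy, hM1t y hy Set.univ MeasurableSet.univ, Measure.restrict_univ]
      have hgy : (∫⁻ m, ENNReal.ofReal (π y m)) = ENNReal.ofReal (πY y) := hy.2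
      rw [hgy]
      exact ENNReal.div_self (ENNReal.ofReal_pos.2 hy.1).ne' ENNReal.ofReal_ne_top
    · rw [hκ'nmem y hy]
      exact hμmP
  -- ν disintegrates through κ'
  have hcomp' : ν = ν.fst ⊗ₘ κ' := by
    refine MeasureTheory.ext_of_generate_finite _
      generateFrom_prod.symm isPiSystem_prod ?_ ?_
    · rintro _ ⟨s, hs, t, ht, rfl⟩
      simp only [Set.mem_setOf_eq] at hs ht
      rw [hrect hs ht, Measure.compProd_apply_prod hs ht, hfstg,
        setLIntegral_withDensity_eq_setLIntegral_mul _ hgmeas (κ'.measurable_coe ht) hs]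
      refine lintegral_congr_ae (ae_restrict_of_ae ?_)
      filter_upwards [hgae] with y hy
      by_cases hy1 : 0 < πY y
      · have hyc : y ∈ c := ⟨hy1, hy⟩
        show (∫⁻ m in t, ENNReal.ofReal (π y m)) = g y * κ' y t
        rw [hκ'mem y hyc, hM1t y hyc t ht, hy]
        rw [ENNReal.mul_div_cancel (ENNReal.ofReal_pos.2 hy1).ne' ENNReal.ofReal_ne_top]
      · have hy0 : πY y = 0 := le_antisymm (not_lt.1 hy1)
          (by rw [hπY y]; exact integral_nonneg (hπnn y))
        have hgy0 : g y = 0 := by rw [hy, hy0, ENNReal.ofReal_zero]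
        have hRHS0 : (∫⁻ m in t, ENNReal.ofReal (π y m)) = 0 := by
          refine le_antisymm ?_ (zero_le)
          calc (∫⁻ m in t, ENNReal.ofReal (π y m))
              ≤ ∫⁻ m, ENNReal.ofReal (π y m) := setLIntegral_le_lintegral _ _
            _ = 0 := hgy0
        show (∫⁻ m in t, ENNReal.ofReal (π y m)) = g y * κ' y t
        rw [hRHS0, hgy0, zero_mul]
    · rw [Measure.compProd_apply_univ, Measure.fst_univ]
  have huniq2 := ProbabilityTheory.eq_condKernel_of_measure_eq_compProd κ' hcomp'
  have hae : ∀ᵐ y ∂ν.fst, κ y = κ' y := by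
    filter_upwards [huniq1, huniq2] with y h1 h2
    rw [h1, h2]
  rw [hfstg, ae_withDensity_iff hgmeas] at hae
  refine ⟨hmapA, ?_⟩
  filter_upwards [hae, hgae] with y h1 h2 hy1
  have hg0 : g y ≠ 0 := by
    rw [h2]
    exact (ENNReal.ofReal_pos.2 hy1).ne'
  have hk : κ y = κ' y := h1 hg0
  have hyc : y ∈ c := ⟨hy1, h2⟩
  calc Measure.map (fun um => B (Ainv y) um) μm
      = κ y := (hκapp y).symm
    _ = κ' y := hk
    _ = M1 y := hκ'mem y hyc
    _ = volume.withDensity fun m => ENNReal.ofReal (π y m / πY y) := rfl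
end

section
/- Let U ∈ ℝ^{n×r} have orthonormal columns (UᵀU = I_r), and let T̃ : ℝ^r → ℝ^r be a C¹ diffeomorphism that pushes forward the standard Gaussian measure on ℝ^r to the measure with probability density g on ℝ^r. Define T : ℝ^n → ℝ^n by T(v) = U T̃(Uᵀ v) + (I_n − U Uᵀ) v. Then T is a bijection and pushes forward the standard Gaussian measure on ℝ^n to the measure with density m ↦ g(Uᵀ m) · (2π)^{-(n−r)/2} exp(−½ ‖(I_n − U Uᵀ) m‖²). -/
open MeasureTheory Matrix ENNReal

/-- The standard Gaussian density on `ℝ^k`: `φ_k(m) = (2π)^{-k/2} exp(-‖m‖²/2)`. -/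
noncomputable def stdGauss (k : ℕ) (m : Fin k → ℝ) : ℝ :=
  (2 * Real.pi) ^ (-(k : ℝ) / 2) * Real.exp (-(∑ i, m i ^ 2) / 2)

lemma measurable_mulVec' {a b : ℕ} (M : Matrix (Fin a) (Fin b) ℝ) :
    Measurable (M.mulVec) := by
  have h := LinearMap.continuous_of_finiteDimensional (Matrix.mulVecLin M)
  rw [Matrix.coe_mulVecLin] at h
  exact h.measurable

lemma aux_map_equiv_withDensity {α β : Type*} [MeasurableSpace α] [MeasurableSpace β]
    (e : α ≃ᵐ β) (μ : Measure α) (f : β → ℝ≥0∞) :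
    Measure.map e (μ.withDensity (fun a => f (e a))) = (Measure.map e μ).withDensity f := by
  ext s hs
  rw [Measure.map_apply e.measurable hs, withDensity_apply _ hs,
    withDensity_apply _ (e.measurable hs), Measure.restrict_map e.measurable hs,
    lintegral_map_equiv]

lemma aux_prod_withDensity {α β : Type*} [MeasurableSpace α] [MeasurableSpace β]
    (μ : Measure α) (ν : Measure β) [SigmaFinite μ] [SigmaFinite ν]
    {f : α → ℝ≥0∞} {g : β → ℝ≥0∞} (hf : Measurable f) (hg : Measurable g)
    (hf' : ∀ x, f x ≠ ⊤) (hg' : ∀ y, g y ≠ ⊤) :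
    (μ.withDensity f).prod (ν.withDensity g)
      = (μ.prod ν).withDensity (fun p => f p.1 * g p.2) := by
  haveI := SigmaFinite.withDensity_of_ne_top' (μ := μ) hf'
  haveI := SigmaFinite.withDensity_of_ne_top' (μ := ν) hg'
  refine Measure.prod_eq fun s t hs ht => ?_
  rw [withDensity_apply _ (hs.prod ht), ← Measure.prod_restrict,
    lintegral_prod_mul hf.aemeasurable hg.aemeasurable,
    withDensity_apply _ hs, withDensity_apply _ ht]

/-- **Subspace-embedded transport map.** If `U ∈ ℝ^{n×r}` has orthonormal columns
and `T̃ : ℝ^r → ℝ^r` pushes the standard Gaussian on `ℝ^r` forward to density `g`,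
then `T(v) = U T̃(Uᵀv) + (I − UUᵀ)v` is a bijection pushing the standard Gaussian
on `ℝ^n` forward to `m ↦ g(Uᵀm) · (2π)^{-(n−r)/2} exp(−½‖(I − UUᵀ)m‖²)`. -/
theorem subspace_embedded_map_pushforward
    {n r : ℕ} (U : Matrix (Fin n) (Fin r) ℝ) (hU : Uᵀ * U = 1)
    (Tt Ttinv : (Fin r → ℝ) → (Fin r → ℝ))
    (hTt : ContDiff ℝ 1 Tt) (hTtinv : ContDiff ℝ 1 Ttinv)
    (hTtleft : Function.LeftInverse Ttinv Tt)
    (hTtright : Function.RightInverse Ttinv Tt)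
    (g : (Fin r → ℝ) → ℝ) (hgnn : ∀ w, 0 ≤ g w) (hgdens : ∫ w, g w = 1)
    (hpushTt : Measure.map Tt
        (volume.withDensity (fun v => ENNReal.ofReal (stdGauss r v)))
      = volume.withDensity (fun w => ENNReal.ofReal (g w)))
    (T : (Fin n → ℝ) → (Fin n → ℝ))
    (hTdef : ∀ v, T v = U.mulVec (Tt (Uᵀ.mulVec v)) + (v - U.mulVec (Uᵀ.mulVec v))) :
    Function.Bijective T ∧
    Measure.map T (volume.withDensity (fun v => ENNReal.ofReal (stdGauss n v)))
      = volume.withDensity (fun m => ENNReal.ofReal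
          (g (Uᵀ.mulVec m) * ((2 * Real.pi) ^ (-((n : ℝ) - (r : ℝ)) / 2) *
            Real.exp (-(∑ i, (m i - U.mulVec (Uᵀ.mulVec m) i) ^ 2) / 2)))) := by
  classical
  -- ### Part 1: bijectivity (pure matrix algebra)
  have hUtU : ∀ w : Fin r → ℝ, Uᵀ.mulVec (U.mulVec w) = w := by
    intro w
    rw [Matrix.mulVec_mulVec, hU, Matrix.one_mulVec]
  have hbij : Function.Bijective T := by
    rw [Function.bijective_iff_has_inverse]
    refine ⟨fun m => U.mulVec (Ttinv (Uᵀ.mulVec m)) + (m - U.mulVec (Uᵀ.mulVec m)), ?_, ?_⟩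
    · intro v
      have h1 : Uᵀ.mulVec (T v) = Tt (Uᵀ.mulVec v) := by
        rw [hTdef v, Matrix.mulVec_add, Matrix.mulVec_sub, hUtU, Matrix.mulVec_mulVec,
          Matrix.mulVec_mulVec, hU, Matrix.one_mul]
        abel
      dsimp only
      rw [h1, hTtleft (Uᵀ.mulVec v), hTdef v]
      abel
    · intro m
      set m' := U.mulVec (Ttinv (Uᵀ.mulVec m)) + (m - U.mulVec (Uᵀ.mulVec m)) with hm'
      have h1 : Uᵀ.mulVec m' = Ttinv (Uᵀ.mulVec m) := by
        rw [hm', Matrix.mulVec_add, Matrix.mulVec_sub, hUtU, Matrix.mulVec_mulVec,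
          Matrix.mulVec_mulVec, hU, Matrix.one_mul]
        abel
      rw [hTdef m', h1, hTtright (Uᵀ.mulVec m), hm']
      abel
  refine ⟨hbij, ?_⟩
  -- ### Part 2: complete U to an orthogonal matrix
  set u : Fin r → EuclideanSpace ℝ (Fin n) := fun j => WithLp.toLp 2 (fun i => U i j) with hu
  have horm : Orthonormal ℝ u := by
    rw [orthonormal_iff_ite]
    intro i j
    have := congrFun (congrFun hU i) j
    simp only [Matrix.mul_apply, Matrix.transpose_apply, Matrix.one_apply] at this
    simpa [hu, PiLp.inner_apply, RCLike.inner_apply, conj_trivial, mul_comm] using this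
  have hrn : r ≤ n := by
    simpa using horm.linearIndependent.fintype_card_le_finrank
  set k := n - r with hk
  have hnrk : n = r + k := by omega
  set S : Submodule ℝ (EuclideanSpace ℝ (Fin n)) := Submodule.span ℝ (Set.range u) with hS
  have hfinS : Module.finrank ℝ S = r := by
    simpa using finrank_span_eq_card horm.linearIndependent
  have hfinK : Module.finrank ℝ (Sᗮ : Submodule ℝ (EuclideanSpace ℝ (Fin n))) = k := by
    have := Submodule.finrank_add_finrank_orthogonal (K := S)
    rw [hfinS] at this
    simp only [finrank_euclideanSpace_fin] at this
    omega
  set b : OrthonormalBasis (Fin k) ℝ (Sᗮ : Submodule ℝ (EuclideanSpace ℝ (Fin n))) :=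
    (stdOrthonormalBasis ℝ (Sᗮ : Submodule ℝ (EuclideanSpace ℝ (Fin n)))).reindex
      (finCongr hfinK) with hb
  set V : Matrix (Fin n) (Fin k) ℝ := Matrix.of (fun i j => (b j : EuclideanSpace ℝ (Fin n)) i)
    with hV
  have hVtV : Vᵀ * V = 1 := by
    ext a c
    have := (orthonormal_iff_ite.mp b.orthonormal) a c
    rw [Submodule.coe_inner] at this
    simp only [PiLp.inner_apply, RCLike.inner_apply, conj_trivial] at this
    simpa [hV, Matrix.mul_apply, Matrix.one_apply, mul_comm] using this
  have hUtV : Uᵀ * V = 0 := by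
    ext a c
    have hmem : ((b c : EuclideanSpace ℝ (Fin n))) ∈ Sᗮ := (b c).2
    have := (Submodule.mem_orthogonal S _).mp hmem (u a) (Submodule.subset_span ⟨a, rfl⟩)
    simp only [PiLp.inner_apply, RCLike.inner_apply, conj_trivial] at this
    simpa [hV, hu, Matrix.mul_apply, mul_comm] using this
  have hVtU : Vᵀ * U = 0 := by
    have := congrArg Matrix.transpose hUtV
    simpa using this
  set e : Fin r ⊕ Fin k ≃ Fin n := finSumFinEquiv.trans (finCongr hnrk.symm) with he
  set A : Matrix (Fin n) (Fin r ⊕ Fin k) ℝ := Matrix.fromCols U V with hA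
  have hAtA : Aᵀ * A = 1 := by
    rw [hA, Matrix.transpose_fromCols, Matrix.fromRows_mul_fromCols,
      hU, hUtV, hVtU, hVtV, Matrix.fromBlocks_one]
  have hAAt : A * Aᵀ = 1 := by
    rw [hA, Matrix.transpose_fromCols]
    rw [Matrix.fromCols_mul_fromRows_eq_one_comm e.symm]
    rw [← Matrix.transpose_fromCols, ← hA]
    exact hAtA
  have hUUVV : U * Uᵀ + V * Vᵀ = 1 := by
    rw [hA, Matrix.transpose_fromCols, Matrix.fromCols_mul_fromRows] at hAAt
    exact hAAt
  -- ### Part 3: the orthogonal matrix Q and its measurable equivalence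
  set Q : Matrix (Fin n) (Fin n) ℝ := A.submatrix id ⇑e.symm with hQ
  have hQt : Qᵀ = Aᵀ.submatrix (⇑e.symm) id := by rw [hQ, Matrix.transpose_submatrix]
  have hQtQ : Qᵀ * Q = 1 := by
    rw [hQt, hQ,
      show (id : Fin n → Fin n) = ⇑(Equiv.refl (Fin n)) from rfl,
      Matrix.submatrix_mul_equiv, hAtA]
    exact Matrix.submatrix_one_equiv e.symm
  have hQQt : Q * Qᵀ = 1 := mul_eq_one_comm.mp hQtQ
  have hdet : Q.det = 1 ∨ Q.det = -1 := by
    have h2 : Q.det * Q.det = 1 := by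
      have := congrArg Matrix.det hQtQ
      rwa [Matrix.det_mul, Matrix.det_transpose, Matrix.det_one] at this
    exact mul_self_eq_one_iff.mp h2
  have hmeasmv : ∀ (M : Matrix (Fin n) (Fin n) ℝ), Measurable (M.mulVec) :=
    fun M => measurable_mulVec' M
  have hleftQ : ∀ x, Qᵀ.mulVec (Q.mulVec x) = x := fun x => by
    rw [Matrix.mulVec_mulVec, hQtQ, Matrix.one_mulVec]
  have hrightQ : ∀ x, Q.mulVec (Qᵀ.mulVec x) = x := fun x => by
    rw [Matrix.mulVec_mulVec, hQQt, Matrix.one_mulVec]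
  set eQ : (Fin n → ℝ) ≃ᵐ (Fin n → ℝ) :=
    { toEquiv := ⟨Q.mulVec, Qᵀ.mulVec, hleftQ, hrightQ⟩,
      measurable_toFun := hmeasmv Q,
      measurable_invFun := hmeasmv Qᵀ } with heQ
  have hmapvol : ∀ (M : Matrix (Fin n) (Fin n) ℝ), M.det = 1 ∨ M.det = -1 →
      Measure.map (M.mulVec) volume = volume := by
    intro M hM
    have hdet' : M.det ≠ 0 := by rcases hM with h|h <;> rw [h] <;> norm_num
    have h := Real.map_matrix_volume_pi_eq_smul_volume_pi hdet'
    have habs : |(M.det)⁻¹| = 1 := by rcases hM with h'|h' <;> rw [h'] <;> norm_num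
    rw [habs, ENNReal.ofReal_one, one_smul,
      show ⇑(Matrix.toLin' M) = M.mulVec from funext fun x => Matrix.toLin'_apply M x] at h
    exact h
  have hmapQ : Measure.map (Q.mulVec) volume = volume := hmapvol Q hdet
  have hmapQt : Measure.map (Qᵀ.mulVec) volume = volume := by
    refine hmapvol Qᵀ ?_
    rw [Matrix.det_transpose]; exact hdet
  -- ### Part 4: coordinate splitting
  set E : (Fin n → ℝ) ≃ᵐ (Fin r → ℝ) × (Fin k → ℝ) :=
    (MeasurableEquiv.piCongrLeft (fun _ : Fin n => ℝ) e).symm.trans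
      (MeasurableEquiv.sumPiEquivProdPi (fun _ : Fin r ⊕ Fin k => ℝ)) with hE
  have hEapp : ∀ x : Fin n → ℝ,
      E x = (fun j => x (e (Sum.inl j)), fun j => x (e (Sum.inr j))) := by
    intro x; rfl
  have hmpE : MeasurePreserving E volume volume := by
    have h1 := (volume_measurePreserving_piCongrLeft (fun _ : Fin n => ℝ) e).symm
      (MeasurableEquiv.piCongrLeft (fun _ : Fin n => ℝ) e)
    have h2 := volume_measurePreserving_sumPiEquivProdPi (fun _ : Fin r ⊕ Fin k => ℝ)
    exact h2.comp h1
  have hEQ : ∀ m, E (Qᵀ.mulVec m) = (Uᵀ.mulVec m, Vᵀ.mulVec m) := by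
    intro m
    rw [hEapp]
    refine Prod.ext ?_ ?_ <;> funext j <;>
      simp [Matrix.mulVec, dotProduct, hQ, hA, Matrix.fromCols,
        Matrix.submatrix_apply, Equiv.symm_apply_apply, Matrix.transpose_apply]
  have hEQ1 : ∀ x, (E x).1 = Uᵀ.mulVec (Q.mulVec x) := by
    intro x
    have h := hEQ (Q.mulVec x)
    rw [hleftQ x] at h
    rw [h]
  have hEQ2 : ∀ x, (E x).2 = Vᵀ.mulVec (Q.mulVec x) := by
    intro x
    have h := hEQ (Q.mulVec x)
    rw [hleftQ x] at h
    rw [h]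
  have hUT : ∀ v, Uᵀ.mulVec (T v) = Tt (Uᵀ.mulVec v) := by
    intro v
    rw [hTdef v, Matrix.mulVec_add, Matrix.mulVec_sub, hUtU, Matrix.mulVec_mulVec,
      Matrix.mulVec_mulVec, hU, Matrix.one_mul]
    abel
  have hVT : ∀ v, Vᵀ.mulVec (T v) = Vᵀ.mulVec v := by
    intro v
    rw [hTdef v, Matrix.mulVec_add, Matrix.mulVec_sub, Matrix.mulVec_mulVec,
      Matrix.mulVec_mulVec, Matrix.mulVec_mulVec, hVtU, Matrix.zero_mul,
      Matrix.zero_mulVec, Matrix.zero_mulVec]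
    abel
  have hTcomp : T = Q.mulVec ∘ ⇑E.symm ∘ Prod.map Tt id ∘ ⇑E ∘ Qᵀ.mulVec := by
    funext v
    show T v = Q.mulVec (E.symm (Prod.map Tt id (E (Qᵀ.mulVec v))))
    calc T v = Q.mulVec (Qᵀ.mulVec (T v)) := (hrightQ _).symm
      _ = Q.mulVec (E.symm (E (Qᵀ.mulVec (T v)))) := by rw [MeasurableEquiv.symm_apply_apply]
      _ = Q.mulVec (E.symm (Prod.map Tt id (E (Qᵀ.mulVec v)))) := by
          rw [hEQ (T v), hEQ v, hUT v, hVT v]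
          rfl
  -- ### Part 5: analytic facts about the Gaussian density
  have hstdnn : ∀ (j : ℕ) (x : Fin j → ℝ), 0 ≤ stdGauss j x := by
    intro j x; unfold stdGauss; positivity
  have hstdmeas : ∀ j : ℕ, Measurable fun x : Fin j → ℝ => ENNReal.ofReal (stdGauss j x) := by
    intro j
    refine Measurable.ennreal_ofReal ?_
    unfold stdGauss
    fun_prop
  have hdot : ∀ (j : ℕ) (y : Fin j → ℝ), ∑ i, y i ^ 2 = y ⬝ᵥ y := by
    intro j y; simp [dotProduct, pow_two]
  have hsumQt : ∀ x : Fin n → ℝ, ∑ i, (Qᵀ.mulVec x) i ^ 2 = ∑ i, x i ^ 2 := by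
    intro x
    rw [hdot, hdot]
    calc (Qᵀ.mulVec x) ⬝ᵥ (Qᵀ.mulVec x)
        = ((Qᵀ.mulVec x) ᵥ* Qᵀ) ⬝ᵥ x := Matrix.dotProduct_mulVec _ _ _
      _ = x ⬝ᵥ x := by
          rw [Matrix.mulVec_transpose, Matrix.vecMul_vecMul, hQQt, Matrix.vecMul_one]
  have hgq : ∀ x, stdGauss n (Qᵀ.mulVec x) = stdGauss n x := by
    intro x; unfold stdGauss; rw [hsumQt x]
  have hnc : (n : ℝ) = (r : ℝ) + (k : ℝ) := by exact_mod_cast hnrk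
  have hsplit : ∀ x : Fin n → ℝ, stdGauss n x =
      stdGauss r (fun j => x (e (Sum.inl j))) * stdGauss k (fun j => x (e (Sum.inr j))) := by
    intro x
    unfold stdGauss
    have hsum : ∑ i, x i ^ 2 =
        (∑ j, x (e (Sum.inl j)) ^ 2) + ∑ j, x (e (Sum.inr j)) ^ 2 := by
      rw [← Fintype.sum_sum_type (fun s : Fin r ⊕ Fin k => x (e s) ^ 2)]
      exact (Fintype.sum_equiv e (fun s => x (e s) ^ 2) (fun i => x i ^ 2)
        (fun s => rfl)).symm
    rw [hsum]
    rw [show -((n : ℝ)) / 2 = -(r : ℝ) / 2 + -(k : ℝ) / 2 by rw [hnc]; ring]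
    rw [Real.rpow_add (by positivity)]
    rw [show -((∑ j, x (e (Sum.inl j)) ^ 2) + ∑ j, x (e (Sum.inr j)) ^ 2) / 2
      = -(∑ j, x (e (Sum.inl j)) ^ 2) / 2 + -(∑ j, x (e (Sum.inr j)) ^ 2) / 2 by ring]
    rw [Real.exp_add]
    ring
  -- ### Part 6: measurable representative of g, absolute continuity
  have hgInt : Integrable g (volume : Measure (Fin r → ℝ)) := by
    by_contra hcon
    rw [integral_undef hcon] at hgdens
    exact one_ne_zero hgdens.symm
  have hgae : AEMeasurable g (volume : Measure (Fin r → ℝ)) := hgInt.aemeasurable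
  set g₀ : (Fin r → ℝ) → ℝ := hgae.mk g with hg₀def
  have hg₀meas : Measurable g₀ := hgae.measurable_mk
  have hgg₀ : g =ᵐ[(volume : Measure (Fin r → ℝ))] g₀ := hgae.ae_eq_mk
  have hwdgg : (volume.withDensity fun w => ENNReal.ofReal (g w))
      = volume.withDensity fun w => ENNReal.ofReal (g₀ w) :=
    withDensity_congr_ae (hgg₀.mono fun w hw => by dsimp only; rw [hw])
  have habs : Measure.map (Uᵀ.mulVec) (volume : Measure (Fin n → ℝ))
      ≪ (volume : Measure (Fin r → ℝ)) := by
    refine Measure.AbsolutelyContinuous.mk fun s hs h0 => ?_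
    rw [Measure.map_apply (measurable_mulVec' Uᵀ) hs]
    have hmpQ : MeasurePreserving (Q.mulVec) (volume : Measure (Fin n → ℝ)) volume :=
      ⟨hmeasmv Q, hmapQ⟩
    have h1 := hmpQ.measure_preimage
      (((measurable_mulVec' Uᵀ) hs).nullMeasurableSet)
    rw [← h1]
    have hset : Q.mulVec ⁻¹' (Uᵀ.mulVec ⁻¹' s) = ⇑E ⁻¹' (Prod.fst ⁻¹' s) := by
      ext x
      simp only [Set.mem_preimage]
      rw [← hEQ1 x]
    rw [hset]
    have h2 := hmpE.measure_preimage
      ((measurable_fst hs).nullMeasurableSet)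
    rw [h2, ← Set.prod_univ, Measure.volume_eq_prod, Measure.prod_prod, h0, zero_mul]
  -- ### Part 7: the pushforward computation
  have hmeasTt : Measurable Tt := hTt.continuous.measurable
  haveI hsfr : SigmaFinite (volume.withDensity fun w : Fin r → ℝ => ENNReal.ofReal (stdGauss r w)) :=
    SigmaFinite.withDensity_of_ne_top' (fun _ => ENNReal.ofReal_ne_top)
  haveI hsfk : SigmaFinite (volume.withDensity fun z : Fin k → ℝ => ENNReal.ofReal (stdGauss k z)) :=
    SigmaFinite.withDensity_of_ne_top' (fun _ => ENNReal.ofReal_ne_top)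
  have step1 : Measure.map Qᵀ.mulVec (volume.withDensity fun v => ENNReal.ofReal (stdGauss n v))
      = volume.withDensity fun v => ENNReal.ofReal (stdGauss n v) := by
    have h := aux_map_equiv_withDensity eQ.symm volume (fun v => ENNReal.ofReal (stdGauss n v))
    rw [show ⇑eQ.symm = Qᵀ.mulVec from rfl, hmapQt] at h
    calc Measure.map Qᵀ.mulVec (volume.withDensity fun v => ENNReal.ofReal (stdGauss n v))
        = Measure.map Qᵀ.mulVec
            (volume.withDensity fun a => ENNReal.ofReal (stdGauss n (Qᵀ.mulVec a))) :=
          congrArg (Measure.map Qᵀ.mulVec) (congrArg (Measure.withDensity volume)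
            (funext fun a => (congrArg ENNReal.ofReal (hgq a)).symm))
      _ = volume.withDensity fun v => ENNReal.ofReal (stdGauss n v) := h
  have step2 : Measure.map ⇑E (volume.withDensity fun v => ENNReal.ofReal (stdGauss n v))
      = (volume.withDensity fun w : Fin r → ℝ => ENNReal.ofReal (stdGauss r w)).prod
          (volume.withDensity fun z : Fin k → ℝ => ENNReal.ofReal (stdGauss k z)) := by
    have h := aux_map_equiv_withDensity E volume
      (fun p : (Fin r → ℝ) × (Fin k → ℝ) =>
        ENNReal.ofReal (stdGauss r p.1) * ENNReal.ofReal (stdGauss k p.2))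
    rw [hmpE.map_eq] at h
    calc Measure.map ⇑E (volume.withDensity fun v => ENNReal.ofReal (stdGauss n v))
        = Measure.map ⇑E (volume.withDensity fun a =>
            ENNReal.ofReal (stdGauss r (E a).1) * ENNReal.ofReal (stdGauss k (E a).2)) :=
          congrArg (Measure.map ⇑E) (congrArg (Measure.withDensity volume)
            (funext fun a => by
              rw [← ENNReal.ofReal_mul (hstdnn r _)]
              exact congrArg ENNReal.ofReal (by rw [hEapp a]; exact hsplit a)))
      _ = volume.withDensity (fun p : (Fin r → ℝ) × (Fin k → ℝ) =>
            ENNReal.ofReal (stdGauss r p.1) * ENNReal.ofReal (stdGauss k p.2)) := h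
      _ = ((volume : Measure (Fin r → ℝ)).prod (volume : Measure (Fin k → ℝ))).withDensity
            (fun p => ENNReal.ofReal (stdGauss r p.1) * ENNReal.ofReal (stdGauss k p.2)) := by
          rw [← Measure.volume_eq_prod]
      _ = (volume.withDensity fun w : Fin r → ℝ => ENNReal.ofReal (stdGauss r w)).prod
            (volume.withDensity fun z : Fin k → ℝ => ENNReal.ofReal (stdGauss k z)) :=
          (aux_prod_withDensity volume volume (hstdmeas r) (hstdmeas k)
            (fun _ => ENNReal.ofReal_ne_top) (fun _ => ENNReal.ofReal_ne_top)).symm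
  have step3 : Measure.map (Prod.map Tt id)
      ((volume.withDensity fun w : Fin r → ℝ => ENNReal.ofReal (stdGauss r w)).prod
        (volume.withDensity fun z : Fin k → ℝ => ENNReal.ofReal (stdGauss k z)))
      = (volume.withDensity fun w : Fin r → ℝ => ENNReal.ofReal (g₀ w)).prod
          (volume.withDensity fun z : Fin k → ℝ => ENNReal.ofReal (stdGauss k z)) := by
    rw [← Measure.map_prod_map _ _ hmeasTt measurable_id, hpushTt, Measure.map_id, hwdgg]
  have step4 : Measure.map ⇑E.symm
      ((volume.withDensity fun w : Fin r → ℝ => ENNReal.ofReal (g₀ w)).prod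
        (volume.withDensity fun z : Fin k → ℝ => ENNReal.ofReal (stdGauss k z)))
      = volume.withDensity (fun a : Fin n → ℝ =>
          ENNReal.ofReal (g₀ (E a).1) * ENNReal.ofReal (stdGauss k (E a).2)) := by
    have h := aux_map_equiv_withDensity E volume
      (fun p : (Fin r → ℝ) × (Fin k → ℝ) =>
        ENNReal.ofReal (g₀ p.1) * ENNReal.ofReal (stdGauss k p.2))
    rw [hmpE.map_eq] at h
    have h2 : (volume.withDensity fun w : Fin r → ℝ => ENNReal.ofReal (g₀ w)).prod
        (volume.withDensity fun z : Fin k → ℝ => ENNReal.ofReal (stdGauss k z))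
        = Measure.map ⇑E (volume.withDensity (fun a : Fin n → ℝ =>
            ENNReal.ofReal (g₀ (E a).1) * ENNReal.ofReal (stdGauss k (E a).2))) := by
      rw [aux_prod_withDensity volume volume (hg₀meas.ennreal_ofReal) (hstdmeas k)
          (fun _ => ENNReal.ofReal_ne_top) (fun _ => ENNReal.ofReal_ne_top),
        ← Measure.volume_eq_prod]
      exact h.symm
    rw [h2, Measure.map_map E.symm.measurable E.measurable,
      show (⇑E.symm ∘ ⇑E) = id from funext fun x => E.symm_apply_apply x, Measure.map_id]
  have step5 : Measure.map Q.mulVec (volume.withDensity (fun a : Fin n → ℝ =>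
        ENNReal.ofReal (g₀ (E a).1) * ENNReal.ofReal (stdGauss k (E a).2)))
      = volume.withDensity (fun m : Fin n → ℝ =>
          ENNReal.ofReal (g₀ (Uᵀ.mulVec m)) * ENNReal.ofReal (stdGauss k (Vᵀ.mulVec m))) := by
    have h := aux_map_equiv_withDensity eQ volume
      (fun m : Fin n → ℝ =>
        ENNReal.ofReal (g₀ (Uᵀ.mulVec m)) * ENNReal.ofReal (stdGauss k (Vᵀ.mulVec m)))
    rw [show ⇑eQ = Q.mulVec from rfl, hmapQ] at h
    calc Measure.map Q.mulVec (volume.withDensity (fun a : Fin n → ℝ =>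
          ENNReal.ofReal (g₀ (E a).1) * ENNReal.ofReal (stdGauss k (E a).2)))
        = Measure.map Q.mulVec (volume.withDensity (fun a : Fin n → ℝ =>
            ENNReal.ofReal (g₀ (Uᵀ.mulVec (Q.mulVec a)))
              * ENNReal.ofReal (stdGauss k (Vᵀ.mulVec (Q.mulVec a))))) :=
          congrArg (Measure.map Q.mulVec) (congrArg (Measure.withDensity volume)
            (funext fun a => by rw [← hEQ1 a, ← hEQ2 a]))
      _ = volume.withDensity (fun m : Fin n → ℝ =>
            ENNReal.ofReal (g₀ (Uᵀ.mulVec m)) * ENNReal.ofReal (stdGauss k (Vᵀ.mulVec m))) := h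
  have hmain : Measure.map T (volume.withDensity fun v => ENNReal.ofReal (stdGauss n v))
      = volume.withDensity (fun m : Fin n → ℝ =>
          ENNReal.ofReal (g₀ (Uᵀ.mulVec m)) * ENNReal.ofReal (stdGauss k (Vᵀ.mulVec m))) := by
    have m1 : Measurable (Qᵀ.mulVec) := hmeasmv Qᵀ
    have m2 : Measurable ⇑E := E.measurable
    have m3 : Measurable (Prod.map Tt (id : (Fin k → ℝ) → Fin k → ℝ)) :=
      hmeasTt.prodMap (measurable_id (α := Fin k → ℝ))
    have m4 : Measurable ⇑E.symm := E.symm.measurable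
    have m5 : Measurable (Q.mulVec) := hmeasmv Q
    rw [hTcomp,
      ← Measure.map_map m5 (m4.comp (m3.comp (m2.comp m1))),
      ← Measure.map_map m4 (m3.comp (m2.comp m1)),
      ← Measure.map_map m3 (m2.comp m1),
      ← Measure.map_map m2 m1,
      step1, step2, step3, step4, step5]
  -- ### Part 8: identification of the density
  have hkc : ((n : ℝ) - (r : ℝ)) = (k : ℝ) := by
    rw [hk]
    rw [Nat.cast_sub hrn]
  have hsumV : ∀ m : Fin n → ℝ, ∑ i, (m i - U.mulVec (Uᵀ.mulVec m) i) ^ 2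
      = ∑ j, (Vᵀ.mulVec m) j ^ 2 := by
    intro m
    have hVVt : V * Vᵀ = 1 - U * Uᵀ := by
      rw [← hUUVV]; abel
    have hy : (fun i => m i - U.mulVec (Uᵀ.mulVec m) i) = (V * Vᵀ).mulVec m := by
      funext i
      rw [hVVt, Matrix.sub_mulVec, Matrix.one_mulVec, Matrix.mulVec_mulVec]
      rfl
    rw [hdot, hdot, hy]
    have hsym : (V * Vᵀ).mulVec m = m ᵥ* (V * Vᵀ) := by
      rw [← Matrix.mulVec_transpose, Matrix.transpose_mul, Matrix.transpose_transpose]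
    calc ((V * Vᵀ).mulVec m) ⬝ᵥ ((V * Vᵀ).mulVec m)
        = (((V * Vᵀ).mulVec m) ᵥ* (V * Vᵀ)) ⬝ᵥ m := Matrix.dotProduct_mulVec _ _ _
      _ = (m ᵥ* (V * Vᵀ)) ⬝ᵥ m := by
          rw [hsym, Matrix.vecMul_vecMul,
            show (V * Vᵀ) * (V * Vᵀ) = V * Vᵀ by
              rw [Matrix.mul_assoc, ← Matrix.mul_assoc Vᵀ V Vᵀ, hVtV, Matrix.one_mul]]
      _ = ((Vᵀ.mulVec m) ᵥ* Vᵀ) ⬝ᵥ m := by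
          rw [Matrix.mulVec_transpose, Matrix.vecMul_vecMul]
      _ = (Vᵀ.mulVec m) ⬝ᵥ (Vᵀ.mulVec m) := (Matrix.dotProduct_mulVec _ _ _).symm
  have hae2 : ∀ᵐ m ∂(volume : Measure (Fin n → ℝ)), g (Uᵀ.mulVec m) = g₀ (Uᵀ.mulVec m) :=
    ae_of_ae_map (measurable_mulVec' Uᵀ).aemeasurable (hgg₀.filter_mono habs.ae_le)
  have htarget : (fun m : Fin n → ℝ => ENNReal.ofReal
        (g (Uᵀ.mulVec m) * ((2 * Real.pi) ^ (-((n : ℝ) - (r : ℝ)) / 2) *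
          Real.exp (-(∑ i, (m i - U.mulVec (Uᵀ.mulVec m) i) ^ 2) / 2))))
      =ᵐ[(volume : Measure (Fin n → ℝ))]
      (fun m : Fin n → ℝ =>
        ENNReal.ofReal (g₀ (Uᵀ.mulVec m)) * ENNReal.ofReal (stdGauss k (Vᵀ.mulVec m))) := by
    have hc : ∀ m : Fin n → ℝ, (2 * Real.pi) ^ (-((n : ℝ) - (r : ℝ)) / 2) *
        Real.exp (-(∑ i, (m i - U.mulVec (Uᵀ.mulVec m) i) ^ 2) / 2)
        = stdGauss k (Vᵀ.mulVec m) := by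
      intro m
      unfold stdGauss
      rw [hsumV m, hkc]
    filter_upwards [hae2] with m hm
    rw [ENNReal.ofReal_mul (hgnn _), hm, hc m]
  rw [hmain]
  exact (withDensity_congr_ae htarget).symm
end
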